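/- Let d ≥ 3, let q, v be unit vectors in R^d with angle φ ∈ (0, π), and let u be drawn uniformly from the cross-section C = {u ∈ S^{d-1} : ⟨u, q⟩ = cos ψ} with ψ ∈ (0, π). Then for x ∈ [cos(φ+ψ), cos(φ-ψ)], the CDF of X = ⟨v, u⟩ satisfies P(X ≤ x) = I_t((d-2)/2, (d-2)/2), where t = 1/2 + (x - cos φ cos ψ)/(2 sin φ sin ψ) and I_t denotes the regularized incomplete Beta function. -/

import Mathlib

open MeasureTheory Measure Metric Real Set
open scoped RealInnerProductSpace ENNReal NNReal
set_option maxHeartbeats 1000000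
open intervalIntegral
open scoped Pointwise


/-- The uniform (normalized surface) probability measure on the unit sphere
in `EuclideanSpace ℝ (Fin n)`. -/
noncomputable def uniformSphere (n : ℕ) :
    Measure (Metric.sphere (0 : EuclideanSpace ℝ (Fin n)) 1) :=
  ((volume : Measure (EuclideanSpace ℝ (Fin n))).toSphere Set.univ)⁻¹ •
    (volume : Measure (EuclideanSpace ℝ (Fin n))).toSphere

/-- The Beta distribution with parameters `a` and `b`. -/
noncomputable def betaMeasure (a b : ℝ) : Measure ℝ :=
  volume.withDensity fun t =>
    ENNReal.ofReal ((Set.Ioo (0:ℝ) 1).indicator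
      (fun t => Real.Gamma (a + b) / (Real.Gamma a * Real.Gamma b) *
        t ^ (a - 1) * (1 - t) ^ (b - 1)) t)

/-- The regularized incomplete Beta function `I_t(a, b)` (equal to `0` for `t ≤ 0`). -/
noncomputable def regIncBeta (a b t : ℝ) : ℝ :=
  (∫ s in Set.Ioc (0:ℝ) t, s ^ (a - 1) * (1 - s) ^ (b - 1)) /
    (Real.Gamma a * Real.Gamma b / Real.Gamma (a + b))


noncomputable def sliceLen (M : ℕ) (y t : ℝ) : ℝ :=
  if y < 0 then
    if t ≤ y then Real.sqrt (1 - t^2) ^ M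
    else if t ≤ 0 then (-t * (Real.sqrt (1 - y^2) / -y)) ^ M
    else 0
  else
    if t ≤ 0 then Real.sqrt (1 - t^2) ^ M
    else if t ≤ y then Real.sqrt (1 - t^2) ^ M - (t * (Real.sqrt (1 - y^2) / y)) ^ M
    else 0

lemma IL {p : ℝ} (hp : -1 < p) {z₁ z₂ : ℝ} (h₁ : z₁ ∈ Icc (-1:ℝ) 1) (h₂ : z₂ ∈ Icc (-1:ℝ) 1) :
    IntervalIntegrable (fun t : ℝ => (1 - t^2) ^ p) volume z₁ z₂ := by
  have key : IntervalIntegrable (fun t : ℝ => (1 - t^2) ^ p) volume (-1) 1 := by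
    have h0 : IntervalIntegrable (fun t : ℝ => t ^ p) volume 0 2 :=
      intervalIntegral.intervalIntegrable_rpow' hp
    have hA : IntervalIntegrable (fun t : ℝ => (1 + t) ^ p) volume (-1) 1 := by
      have := h0.comp_add_right 1
      norm_num at this
      simpa [add_comm] using this
    have hB : IntervalIntegrable (fun t : ℝ => (1 - t) ^ p) volume (-1) 1 := by
      have := (h0.comp_sub_left 1).symm
      norm_num at this
      exact this
    have contA : ∀ t : ℝ, t ∈ uIcc (0:ℝ) 1 → ContinuousWithinAt (fun t : ℝ => (1 + t) ^ p) (uIcc (0:ℝ) 1) t := by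
      intro t ht
      rw [uIcc_of_le (by norm_num)] at ht
      have h1 : (1:ℝ) + t ≠ 0 := by nlinarith [ht.1, ht.2]
      exact ((Real.continuousAt_rpow_const _ p (Or.inl h1)).comp
        ((continuous_const.add continuous_id).continuousAt)).continuousWithinAt
    have contB : ∀ t : ℝ, t ∈ uIcc (-1:ℝ) 0 → ContinuousWithinAt (fun t : ℝ => (1 - t) ^ p) (uIcc (-1:ℝ) 0) t := by
      intro t ht
      rw [uIcc_of_le (by norm_num)] at ht
      have h1 : (1:ℝ) - t ≠ 0 := by nlinarith [ht.1, ht.2]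
      exact ((Real.continuousAt_rpow_const _ p (Or.inl h1)).comp
        ((continuous_const.sub continuous_id).continuousAt)).continuousWithinAt
    have hsub1 : uIcc (-1:ℝ) 0 ⊆ uIcc (-1:ℝ) 1 := by
      rw [uIcc_of_le (by norm_num : (-1:ℝ) ≤ 0), uIcc_of_le (by norm_num : (-1:ℝ) ≤ 1)]
      exact Icc_subset_Icc le_rfl (by norm_num)
    have hsub2 : uIcc (0:ℝ) 1 ⊆ uIcc (-1:ℝ) 1 := by
      rw [uIcc_of_le (by norm_num : (0:ℝ) ≤ 1), uIcc_of_le (by norm_num : (-1:ℝ) ≤ 1)]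
      exact Icc_subset_Icc (by norm_num) le_rfl
    have half1 : IntervalIntegrable (fun t : ℝ => (1 - t^2) ^ p) volume (-1) 0 := by
      have prod : IntervalIntegrable (fun t : ℝ => (1 + t) ^ p * (1 - t) ^ p) volume (-1) 0 :=
        (hA.mono_set hsub1).mul_continuousOn contB
      refine prod.congr ?_
      intro t ht
      rw [uIoc_of_le (by norm_num : (-1:ℝ) ≤ 0)] at ht
      show (1 + t) ^ p * (1 - t) ^ p = (1 - t^2) ^ p
      rw [← Real.mul_rpow (by linarith [ht.1] : (0:ℝ) ≤ 1 + t) (by linarith [ht.2] : (0:ℝ) ≤ 1 - t)]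
      ring_nf
    have half2 : IntervalIntegrable (fun t : ℝ => (1 - t^2) ^ p) volume 0 1 := by
      have prod : IntervalIntegrable (fun t : ℝ => (1 - t) ^ p * (1 + t) ^ p) volume 0 1 :=
        (hB.mono_set hsub2).mul_continuousOn contA
      refine prod.congr ?_
      intro t ht
      rw [uIoc_of_le (by norm_num : (0:ℝ) ≤ 1)] at ht
      show (1 - t) ^ p * (1 + t) ^ p = (1 - t^2) ^ p
      rw [← Real.mul_rpow (by linarith [ht.2] : (0:ℝ) ≤ 1 - t) (by linarith [ht.1] : (0:ℝ) ≤ 1 + t)]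
      ring_nf
    exact half1.trans half2
  refine key.mono_set ?_
  rw [uIcc_of_le (by norm_num : (-1:ℝ) ≤ 1)]
  exact uIcc_subset_Icc h₁ h₂

lemma KL {c : ℝ} (hc : 1/2 ≤ c) {y : ℝ} (hy : y ∈ Icc (-1:ℝ) 1) :
    ∫ t in (-1:ℝ)..y, (1 - t^2) ^ c =
      (2*c/(2*c+1)) * (∫ t in (-1:ℝ)..y, (1 - t^2) ^ (c-1))
        + y * (1 - y^2) ^ c / (2*c+1) := by
  have hc0 : (0:ℝ) < c := by linarith
  have hc1 : (-1:ℝ) < c - 1 := by linarith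
  have hy1 : (-1:ℝ) ≤ y := hy.1
  have i1 : IntervalIntegrable (fun t : ℝ => (1 - t^2) ^ c) volume (-1) y :=
    IL (by linarith) (by norm_num) hy
  have i2 : IntervalIntegrable (fun t : ℝ => (1 - t^2) ^ (c-1)) volume (-1) y :=
    IL hc1 (by norm_num) hy
  set F : ℝ → ℝ := fun t => t * (1 - t^2) ^ c / (2*c+1) with hF
  have contF : ContinuousOn F (Icc (-1) y) := by
    apply Continuous.continuousOn
    exact ((continuous_id.mul ((Real.continuous_rpow_const hc0.le).comp
      (continuous_const.sub (continuous_pow 2)))).div_const _)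
  have hderiv : ∀ x ∈ Ioo (-1:ℝ) y, HasDerivWithinAt F
      ((1 - x^2) ^ c - (2*c/(2*c+1)) * (1 - x^2) ^ (c-1)) (Ioi x) x := by
    intro x hx
    have hx1 : (0:ℝ) < 1 - x^2 := by nlinarith [hx.1, hx.2, hy.2]
    have h1 : HasDerivAt (fun t : ℝ => 1 - t^2) (-(2*x)) x := by
      simpa using ((hasDerivAt_pow 2 x).const_sub 1)
    have h2 : HasDerivAt (fun t : ℝ => (1 - t^2) ^ c)
        (c * (1 - x^2) ^ (c-1) * (-(2*x))) x :=
      by convert h1.rpow_const (p := c) (Or.inl hx1.ne') using 1; ring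
    have h3 : HasDerivAt F
        ((1 * (1 - x^2) ^ c + x * (c * (1 - x^2) ^ (c-1) * (-(2*x)))) / (2*c+1)) x :=
      ((hasDerivAt_id x).mul h2).div_const _
    have key : (1 * (1 - x^2) ^ c + x * (c * (1 - x^2) ^ (c-1) * (-(2*x)))) / (2*c+1)
        = (1 - x^2) ^ c - (2*c/(2*c+1)) * (1 - x^2) ^ (c-1) := by
      have e1 : (1 - x^2) ^ c = (1 - x^2) ^ (c-1) * (1 - x^2) := by
        rw [← Real.rpow_add_one hx1.ne' (c-1)]; ring_nf
      rw [e1]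
      have h2c : (2*c+1) ≠ 0 := by positivity
      field_simp
      ring
    rw [← key]
    exact h3.hasDerivWithinAt
  have ftc := intervalIntegral.integral_eq_sub_of_hasDeriv_right_of_le hy1 contF hderiv
    (i1.sub (i2.const_mul _))
  have hF1 : F (-1) = 0 := by
    have : ((1:ℝ) - (-1)^2) = 0 := by norm_num
    simp [hF, this, Real.zero_rpow hc0.ne']
  have hFy : F y = y * (1 - y^2) ^ c / (2*c+1) := rfl
  rw [intervalIntegral.integral_sub i1 (i2.const_mul _), intervalIntegral.integral_const_mul]
    at ftc
  rw [hF1, hFy, sub_zero] at ftc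
  linarith [ftc]


lemma pow_sqrt_eq {x : ℝ} (hx : 0 ≤ x) (M : ℕ) : Real.sqrt x ^ M = x ^ ((M:ℝ)/2) := by
  rw [Real.sqrt_eq_rpow, ← Real.rpow_natCast (x ^ ((1:ℝ)/2)) M, ← Real.rpow_mul hx]
  congr 1
  ring

lemma sliceLen_repr_neg {m : ℕ} {y : ℝ} (hy0 : y < 0) :
    sliceLen (m+1) y = (Ioc (-1:ℝ) y).indicator (fun t => Real.sqrt (1 - t^2) ^ (m+1))
      + (Ioc y 0).indicator (fun t => (-t * (Real.sqrt (1 - y^2) / -y)) ^ (m+1)) := by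
  funext t
  simp only [sliceLen, if_pos hy0, Pi.add_apply]
  by_cases h1 : t ≤ y
  · rw [if_pos h1, indicator_of_notMem (fun h => absurd h1 (not_le.mpr (mem_Ioc.mp h).1)),
      add_zero]
    by_cases h2 : (-1:ℝ) < t
    · rw [indicator_of_mem (mem_Ioc.mpr ⟨h2, h1⟩)]
    · rw [indicator_of_notMem (fun h => absurd (mem_Ioc.mp h).1 h2)]
      have h3 : Real.sqrt (1 - t^2) = 0 := by
        rw [Real.sqrt_eq_zero']
        push_neg at h2
        nlinarith
      rw [h3, zero_pow (Nat.succ_ne_zero m)]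
  · rw [if_neg h1, indicator_of_notMem (fun h => absurd (mem_Ioc.mp h).2 h1), zero_add]
    by_cases h2 : t ≤ 0
    · rw [if_pos h2, indicator_of_mem (mem_Ioc.mpr ⟨not_le.mp h1, h2⟩)]
    · rw [if_neg h2, indicator_of_notMem (fun h => absurd (mem_Ioc.mp h).2 h2)]

lemma sliceLen_repr_nonneg {m : ℕ} {y : ℝ} (hy0 : 0 ≤ y) :
    sliceLen (m+1) y = (Ioc (-1:ℝ) 0).indicator (fun t => Real.sqrt (1 - t^2) ^ (m+1))
      + (Ioc 0 y).indicator
          (fun t => Real.sqrt (1 - t^2) ^ (m+1) - (t * (Real.sqrt (1 - y^2) / y)) ^ (m+1)) := by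
  funext t
  simp only [sliceLen, if_neg (not_lt.mpr hy0), Pi.add_apply]
  by_cases h1 : t ≤ 0
  · rw [if_pos h1, indicator_of_notMem (fun h => absurd (mem_Ioc.mp h).1 (not_lt.mpr h1)),
      add_zero]
    by_cases h2 : (-1:ℝ) < t
    · rw [indicator_of_mem (mem_Ioc.mpr ⟨h2, h1⟩)]
    · rw [indicator_of_notMem (fun h => absurd (mem_Ioc.mp h).1 h2)]
      have h3 : Real.sqrt (1 - t^2) = 0 := by
        rw [Real.sqrt_eq_zero']
        push_neg at h2
        nlinarith
      rw [h3, zero_pow (Nat.succ_ne_zero m)]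
  · rw [if_neg h1, indicator_of_notMem (fun h => absurd (mem_Ioc.mp h).2 h1), zero_add]
    by_cases h2 : t ≤ y
    · rw [if_pos h2, indicator_of_mem (mem_Ioc.mpr ⟨not_le.mp h1, h2⟩)]
    · rw [if_neg h2, indicator_of_notMem (fun h => absurd (mem_Ioc.mp h).2 h2)]

lemma sliceLen_intg {m : ℕ} {y : ℝ} (hy : y ∈ Icc (-1:ℝ) 1) :
    Integrable (sliceLen (m+1) y) volume ∧
    ∫ t, sliceLen (m+1) y t =
      (((m:ℝ)+1)/((m:ℝ)+2)) * ∫ t in (-1:ℝ)..y, (1 - t^2) ^ (((m:ℝ)-1)/2) := by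
  set c : ℝ := ((m:ℝ)+1)/2 with hc_def
  have hc : 1/2 ≤ c := by
    rw [hc_def]; have : (0:ℝ) ≤ m := Nat.cast_nonneg m; linarith
  have hcm : c - 1 = ((m:ℝ)-1)/2 := by rw [hc_def]; ring
  have h2c : 2*c = (m:ℝ)+1 := by rw [hc_def]; ring
  have h2c1 : 2*c+1 = (m:ℝ)+2 := by rw [hc_def]; ring
  have f1cont : Continuous (fun t : ℝ => Real.sqrt (1 - t^2) ^ (m+1)) :=
    (Real.continuous_sqrt.comp (continuous_const.sub (continuous_pow 2))).pow (m+1)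
  have f1eq : ∀ a b : ℝ, a ∈ Icc (-1:ℝ) 1 → b ∈ Icc (-1:ℝ) 1 →
      ∫ t in a..b, Real.sqrt (1 - t^2) ^ (m+1) = ∫ t in a..b, (1 - t^2) ^ c := by
    intro a b ha hb
    refine intervalIntegral.integral_congr fun t ht => ?_
    have ht' : t ∈ Icc (-1:ℝ) 1 := (uIcc_subset_Icc ha hb) ht
    have h0 : (0:ℝ) ≤ 1 - t^2 := by nlinarith [ht'.1, ht'.2]
    rw [pow_sqrt_eq h0]
    norm_num [hc_def]
  have hy2 : (0:ℝ) ≤ 1 - y^2 := by nlinarith [hy.1, hy.2]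
  have sqY : Real.sqrt (1 - y^2) ^ (m+1) = (1 - y^2) ^ c := by
    rw [pow_sqrt_eq hy2]; norm_num [hc_def]
  rcases lt_or_ge y 0 with hy0 | hy0
  · -- y < 0
    set q : ℝ := Real.sqrt (1 - y^2) / -y with hq
    have repr : sliceLen (m+1) y = (Ioc (-1:ℝ) y).indicator (fun t => Real.sqrt (1 - t^2) ^ (m+1))
        + (Ioc y 0).indicator (fun t => (-t * q) ^ (m+1)) := by
      rw [hq]; exact sliceLen_repr_neg hy0
    have i1 : IntegrableOn (fun t : ℝ => Real.sqrt (1 - t^2) ^ (m+1)) (Ioc (-1:ℝ) y) volume :=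
      f1cont.integrableOn_Ioc
    have i2 : IntegrableOn (fun t : ℝ => (-t * q) ^ (m+1)) (Ioc y 0) volume :=
      (Continuous.integrableOn_Ioc ((continuous_id.neg.mul continuous_const).pow _))
    have int1 : Integrable ((Ioc (-1:ℝ) y).indicator (fun t => Real.sqrt (1 - t^2) ^ (m+1))) volume :=
      i1.integrable_indicator measurableSet_Ioc
    have int2 : Integrable ((Ioc y 0).indicator (fun t => (-t * q) ^ (m+1))) volume :=
      i2.integrable_indicator measurableSet_Ioc
    constructor
    · rw [repr]; exact int1.add int2
    rw [repr]
    simp only [Pi.add_apply]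
    rw [MeasureTheory.integral_add int1 int2, MeasureTheory.integral_indicator measurableSet_Ioc,
      MeasureTheory.integral_indicator measurableSet_Ioc,
      ← intervalIntegral.integral_of_le hy.1, ← intervalIntegral.integral_of_le hy0.le]
    have e2 : ∫ t in y..(0:ℝ), (-t * q) ^ (m+1) = ((-y) ^ (m+2) / ((m:ℝ)+2)) * q ^ (m+1) := by
      have : ∀ t : ℝ, (-t * q) ^ (m+1) = (-t) ^ (m+1) * q ^ (m+1) := fun t => mul_pow _ _ _
      simp_rw [this]
      rw [intervalIntegral.integral_mul_const]
      congr 1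
      have := intervalIntegral.integral_comp_neg (a := y) (b := (0:ℝ)) (fun s : ℝ => s ^ (m+1))
      rw [this]
      rw [neg_zero, integral_pow]
      push_cast
      ring_nf
    rw [f1eq _ _ (by norm_num) hy, KL hc hy, e2]
    have hq1 : q ^ (m+1) = (1 - y^2) ^ c / (-y) ^ (m+1) := by
      rw [hq, div_pow, sqY]
    have hyne : (-y) ≠ 0 := by linarith
    have key : (-y) ^ (m+2) / ((m:ℝ)+2) * q ^ (m+1) = -(y * (1 - y^2) ^ c) / ((m:ℝ)+2) := by
      rw [hq1]
      rw [pow_succ (-y) (m+1)]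
      field_simp
    rw [key]
    simp only [hcm, h2c, h2c1]
    ring
  · -- 0 ≤ y
    set q : ℝ := Real.sqrt (1 - y^2) / y with hq
    have repr : sliceLen (m+1) y = (Ioc (-1:ℝ) 0).indicator (fun t => Real.sqrt (1 - t^2) ^ (m+1))
        + (Ioc 0 y).indicator
            (fun t => Real.sqrt (1 - t^2) ^ (m+1) - (t * q) ^ (m+1)) := by
      rw [hq]; exact sliceLen_repr_nonneg hy0
    have f2cont : Continuous (fun t : ℝ => Real.sqrt (1 - t^2) ^ (m+1) - (t * q) ^ (m+1)) :=
      f1cont.sub ((continuous_id.mul continuous_const).pow _)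
    have i1 : IntegrableOn (fun t : ℝ => Real.sqrt (1 - t^2) ^ (m+1)) (Ioc (-1:ℝ) 0) volume :=
      f1cont.integrableOn_Ioc
    have i2 : IntegrableOn (fun t : ℝ => Real.sqrt (1 - t^2) ^ (m+1) - (t * q) ^ (m+1)) (Ioc 0 y) volume :=
      f2cont.integrableOn_Ioc
    have int1 : Integrable ((Ioc (-1:ℝ) 0).indicator (fun t => Real.sqrt (1 - t^2) ^ (m+1))) volume :=
      i1.integrable_indicator measurableSet_Ioc
    have int2 : Integrable ((Ioc 0 y).indicator (fun t => Real.sqrt (1 - t^2) ^ (m+1) - (t * q) ^ (m+1))) volume :=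
      i2.integrable_indicator measurableSet_Ioc
    constructor
    · rw [repr]; exact int1.add int2
    rw [repr]
    simp only [Pi.add_apply]
    rw [MeasureTheory.integral_add int1 int2, MeasureTheory.integral_indicator measurableSet_Ioc,
      MeasureTheory.integral_indicator measurableSet_Ioc,
      ← intervalIntegral.integral_of_le (by norm_num : (-1:ℝ) ≤ 0),
      ← intervalIntegral.integral_of_le hy0]
    have hcont3 : Continuous (fun t : ℝ => (t*q)^(m+1)) :=
      (continuous_id.mul continuous_const).pow _
    rw [intervalIntegral.integral_sub (f1cont.intervalIntegrable _ _)
      (hcont3.intervalIntegrable _ _)]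
    rw [← add_sub_assoc,
      intervalIntegral.integral_add_adjacent_intervals (f1cont.intervalIntegrable _ _)
        (f1cont.intervalIntegrable _ _)]
    have e2 : ∫ t in (0:ℝ)..y, (t * q) ^ (m+1) = (y ^ (m+2) / ((m:ℝ)+2)) * q ^ (m+1) := by
      have : ∀ t : ℝ, (t * q) ^ (m+1) = t ^ (m+1) * q ^ (m+1) := fun t => mul_pow _ _ _
      simp_rw [this]
      rw [intervalIntegral.integral_mul_const, integral_pow]
      push_cast
      ring_nf
    rw [f1eq _ _ (by norm_num) hy, KL hc hy, e2]
    have key : y ^ (m+2) / ((m:ℝ)+2) * q ^ (m+1) = y * (1 - y^2) ^ c / ((m:ℝ)+2) := by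
      rcases eq_or_lt_of_le hy0 with h | h
      · rw [← h]; simp [zero_pow (by omega : m + 2 ≠ 0)]
      · have hq1 : q ^ (m+1) = (1 - y^2) ^ c / y ^ (m+1) := by rw [hq, div_pow, sqY]
        rw [hq1, pow_succ y (m+1)]
        field_simp
    rw [key]
    simp only [hcm, h2c, h2c1]
    ring


lemma sq_le_iff' {a b : ℝ} (ha : 0 ≤ a) (hb : 0 ≤ b) : a ≤ b ↔ a^2 ≤ b^2 :=
  ⟨fun h => by nlinarith, fun h => by nlinarith⟩

lemma slice_vol (m : ℕ) {y : ℝ} (hy : y ∈ Icc (-1:ℝ) 1) (t : ℝ) :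
    volume {x : EuclideanSpace ℝ (Fin (m+1)) |
        ‖x‖^2 < 1 - t^2 ∧ t ≤ y * Real.sqrt (t^2 + ‖x‖^2)}
      = ENNReal.ofReal (sliceLen (m+1) y t)
          * volume (Metric.ball (0:EuclideanSpace ℝ (Fin (m+1))) 1) := by
  have hrank : Module.finrank ℝ (EuclideanSpace ℝ (Fin (m+1))) = m + 1 := by
    simp [finrank_euclideanSpace]
  set V := volume (Metric.ball (0:EuclideanSpace ℝ (Fin (m+1))) 1) with hV
  set R : ℝ := Real.sqrt (1 - t^2) with hR
  have hR0 : 0 ≤ R := Real.sqrt_nonneg _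
  have hball : ∀ x : EuclideanSpace ℝ (Fin (m+1)),
      ‖x‖^2 < 1 - t^2 ↔ x ∈ Metric.ball (0:EuclideanSpace ℝ (Fin (m+1))) R := by
    intro x
    rw [mem_ball_zero_iff, hR, Real.lt_sqrt (norm_nonneg x)]
  have volball : ∀ r : ℝ, 0 ≤ r → volume (Metric.ball (0:EuclideanSpace ℝ (Fin (m+1))) r)
      = ENNReal.ofReal (r ^ (m+1)) * V := by
    intro r hr
    rw [Measure.addHaar_ball _ _ hr, hrank, hV]
  have volcball : ∀ r : ℝ, 0 ≤ r → volume (Metric.closedBall (0:EuclideanSpace ℝ (Fin (m+1))) r)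
      = ENNReal.ofReal (r ^ (m+1)) * V := by
    intro r hr
    rw [Measure.addHaar_closedBall _ _ hr, hrank, hV]
  have hSnn : ∀ x : EuclideanSpace ℝ (Fin (m+1)), (0:ℝ) ≤ Real.sqrt (t^2 + ‖x‖^2) :=
    fun x => Real.sqrt_nonneg _
  have hSsq : ∀ x : EuclideanSpace ℝ (Fin (m+1)), Real.sqrt (t^2 + ‖x‖^2)^2 = t^2 + ‖x‖^2 :=
    fun x => Real.sq_sqrt (by positivity)
  rcases lt_or_ge y 0 with hy0 | hy0
  · rcases le_or_gt t y with hty | hty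
    · -- A2 : t ≤ y < 0, full ball
      have hts : t ≤ 0 := hty.trans hy0.le
      have hset : {x : EuclideanSpace ℝ (Fin (m+1)) |
          ‖x‖^2 < 1 - t^2 ∧ t ≤ y * Real.sqrt (t^2 + ‖x‖^2)}
          = Metric.ball (0:EuclideanSpace ℝ (Fin (m+1))) R := by
        ext x
        simp only [mem_setOf_eq, hball x]
        refine ⟨fun h => h.1, fun h => ⟨h, ?_⟩⟩
        rw [← hball x] at h
        set S := Real.sqrt (t^2 + ‖x‖^2)
        have hSsq' := hSsq x
        have hS0 := hSnn x
        have h1 : (y*S)^2 ≤ t^2 := by nlinarith [hy.1, sq_nonneg y, norm_nonneg x]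
        have h2 : y * S ≤ 0 := mul_nonpos_iff.mpr (Or.inr ⟨hy0.le, hS0⟩)
        have h3 : |y*S| ≤ |t| := by
          have := Real.sqrt_le_sqrt h1
          rwa [Real.sqrt_sq_eq_abs, Real.sqrt_sq_eq_abs] at this
        rw [abs_of_nonpos h2, abs_of_nonpos hts] at h3
        linarith
      rw [hset, volball R hR0]
      congr 2
      simp only [sliceLen, if_pos hy0, if_pos hty, hR]
    · rcases le_or_gt t 0 with hts | hts
      · -- A3 : y < t ≤ 0
        set ρ : ℝ := -t * (Real.sqrt (1 - y^2) / -y) with hρ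
        have hyne : y ≠ 0 := hy0.ne
        have h1y : (0:ℝ) ≤ 1 - y^2 := by nlinarith [hy.1, hy.2]
        have hρ0 : 0 ≤ ρ := by
          rw [hρ]
          have h2 : (0:ℝ) ≤ Real.sqrt (1 - y^2) / -y := by
            apply div_nonneg (Real.sqrt_nonneg _); linarith
          exact mul_nonneg (by linarith) h2
        have hρsq : ρ^2 = t^2 * (1 - y^2) / y^2 := by
          rw [hρ, mul_pow, div_pow, Real.sq_sqrt h1y]
          ring
        have hρR : ρ^2 ≤ 1 - t^2 := by
          rw [hρsq, div_le_iff₀ (by positivity : (0:ℝ) < y^2)]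
          nlinarith
        have hcond : ∀ x : EuclideanSpace ℝ (Fin (m+1)),
            (t ≤ y * Real.sqrt (t^2 + ‖x‖^2)) ↔ ‖x‖ ≤ ρ := by
          intro x
          set S := Real.sqrt (t^2 + ‖x‖^2)
          have hS0 := hSnn x
          have hSsq' := hSsq x
          constructor
          · intro h
            have hys : y * S ≤ 0 := mul_nonpos_iff.mpr (Or.inr ⟨hy0.le, hS0⟩)
            have h1 : (y*S)^2 ≤ t^2 := by nlinarith
            rw [sq_le_iff' (norm_nonneg x) hρ0]
            have h2 : y^2 * ‖x‖^2 ≤ t^2 * (1 - y^2) := by nlinarith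
            rw [hρsq, le_div_iff₀ (by positivity : (0:ℝ) < y^2)]
            nlinarith
          · intro h
            have h1 : ‖x‖^2 ≤ ρ^2 := (sq_le_iff' (norm_nonneg x) hρ0).mp h
            have h2 : (y*S)^2 ≤ t^2 := by
              rw [hρsq] at h1
              have := (le_div_iff₀ (by positivity : (0:ℝ) < y^2)).mp h1
              nlinarith
            have hys : y * S ≤ 0 := mul_nonpos_iff.mpr (Or.inr ⟨hy0.le, hS0⟩)
            have h3 : |y*S| ≤ |t| := by
              have := Real.sqrt_le_sqrt h2
              rwa [Real.sqrt_sq_eq_abs, Real.sqrt_sq_eq_abs] at this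
            rw [abs_of_nonpos hys, abs_of_nonpos hts] at h3
            linarith
        have hset : {x : EuclideanSpace ℝ (Fin (m+1)) |
            ‖x‖^2 < 1 - t^2 ∧ t ≤ y * Real.sqrt (t^2 + ‖x‖^2)}
            = Metric.ball (0:EuclideanSpace ℝ (Fin (m+1))) R
              ∩ Metric.closedBall (0:EuclideanSpace ℝ (Fin (m+1))) ρ := by
          ext x
          simp only [mem_setOf_eq, mem_inter_iff, hball x, hcond x, mem_closedBall_zero_iff]
          try tauto
        have hballρ : Metric.ball (0:EuclideanSpace ℝ (Fin (m+1))) ρ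
            ⊆ Metric.ball (0:EuclideanSpace ℝ (Fin (m+1))) R
              ∩ Metric.closedBall (0:EuclideanSpace ℝ (Fin (m+1))) ρ := by
          intro x hx
          rw [mem_ball_zero_iff] at hx
          constructor
          · rw [mem_ball_zero_iff]
            calc ‖x‖ < ρ := hx
            _ ≤ R := by
              rw [sq_le_iff' hρ0 hR0]
              rw [hR, Real.sq_sqrt (by nlinarith : (0:ℝ) ≤ 1 - t^2)]
              exact hρR
          · exact mem_closedBall_zero_iff.mpr hx.le
        have hsub2 : Metric.ball (0:EuclideanSpace ℝ (Fin (m+1))) R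
              ∩ Metric.closedBall (0:EuclideanSpace ℝ (Fin (m+1))) ρ
            ⊆ Metric.closedBall (0:EuclideanSpace ℝ (Fin (m+1))) ρ := inter_subset_right
        have hvol : volume ({x : EuclideanSpace ℝ (Fin (m+1)) |
            ‖x‖^2 < 1 - t^2 ∧ t ≤ y * Real.sqrt (t^2 + ‖x‖^2)})
            = ENNReal.ofReal (ρ ^ (m+1)) * V := by
          rw [hset]
          refine le_antisymm ?_ ?_
          · rw [← volcball ρ hρ0]
            exact measure_mono hsub2
          · rw [← volball ρ hρ0]
            exact measure_mono hballρ
        rw [hvol]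
        congr 2
        simp only [sliceLen, if_pos hy0, if_neg (not_le.mpr hty), if_pos hts, hρ]
      · -- A1 : 0 < t, empty
        have hset : {x : EuclideanSpace ℝ (Fin (m+1)) |
            ‖x‖^2 < 1 - t^2 ∧ t ≤ y * Real.sqrt (t^2 + ‖x‖^2)} = ∅ := by
          ext x
          simp only [mem_setOf_eq, mem_empty_iff_false, iff_false, not_and]
          intro _
          have : y * Real.sqrt (t^2 + ‖x‖^2) ≤ 0 :=
            mul_nonpos_iff.mpr (Or.inr ⟨hy0.le, hSnn x⟩)
          intro h; linarith
        rw [hset]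
        simp only [sliceLen, if_pos hy0, if_neg (not_le.mpr (hy0.trans hts)),
          if_neg (not_le.mpr hts), measure_empty, ENNReal.ofReal_zero, zero_mul]
  · rcases le_or_gt t 0 with hts | hts
    · -- B1 : t ≤ 0, full ball
      have hset : {x : EuclideanSpace ℝ (Fin (m+1)) |
          ‖x‖^2 < 1 - t^2 ∧ t ≤ y * Real.sqrt (t^2 + ‖x‖^2)}
          = Metric.ball (0:EuclideanSpace ℝ (Fin (m+1))) R := by
        ext x
        simp only [mem_setOf_eq, hball x]
        exact ⟨fun h => h.1, fun h => ⟨h, hts.trans (mul_nonneg hy0 (hSnn x))⟩⟩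
      rw [hset, volball R hR0]
      congr 2
      simp only [sliceLen, if_neg (not_lt.mpr hy0), if_pos hts, hR]
    · rcases le_or_gt t y with hty | hty
      · -- B2 : 0 < t ≤ y, annulus
        have hy0' : 0 < y := lt_of_lt_of_le hts hty
        set ρ : ℝ := t * (Real.sqrt (1 - y^2) / y) with hρ
        have h1y : (0:ℝ) ≤ 1 - y^2 := by nlinarith [hy.1, hy.2]
        have hρ0 : 0 ≤ ρ := by
          rw [hρ]
          exact mul_nonneg hts.le (div_nonneg (Real.sqrt_nonneg _) hy0'.le)
        have hρsq : ρ^2 = t^2 * (1 - y^2) / y^2 := by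
          rw [hρ, mul_pow, div_pow, Real.sq_sqrt h1y]
          ring
        have ht1 : (0:ℝ) ≤ 1 - t^2 := by nlinarith [hy.2]
        have hρR : ρ ≤ R := by
          rw [sq_le_iff' hρ0 hR0, hR, Real.sq_sqrt ht1, hρsq,
            div_le_iff₀ (by positivity : (0:ℝ) < y^2)]
          nlinarith
        have hcond : ∀ x : EuclideanSpace ℝ (Fin (m+1)),
            (t ≤ y * Real.sqrt (t^2 + ‖x‖^2)) ↔ ρ ≤ ‖x‖ := by
          intro x
          set S := Real.sqrt (t^2 + ‖x‖^2)
          have hS0 := hSnn x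
          have hSsq' := hSsq x
          constructor
          · intro h
            have h1 : t^2 ≤ (y*S)^2 := by nlinarith
            rw [sq_le_iff' hρ0 (norm_nonneg x), hρsq,
              div_le_iff₀ (by positivity : (0:ℝ) < y^2)]
            nlinarith
          · intro h
            have h1 : ρ^2 ≤ ‖x‖^2 := (sq_le_iff' hρ0 (norm_nonneg x)).mp h
            rw [hρsq] at h1
            have h2 := (div_le_iff₀ (by positivity : (0:ℝ) < y^2)).mp h1
            have h3 : t^2 ≤ (y*S)^2 := by nlinarith
            have h4 : |t| ≤ |y*S| := by
              have := Real.sqrt_le_sqrt h3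
              rwa [Real.sqrt_sq_eq_abs, Real.sqrt_sq_eq_abs] at this
            have h5 : 0 ≤ y * S := mul_nonneg hy0 hS0
            rw [abs_of_pos hts, abs_of_nonneg h5] at h4
            exact h4
        have hset : {x : EuclideanSpace ℝ (Fin (m+1)) |
            ‖x‖^2 < 1 - t^2 ∧ t ≤ y * Real.sqrt (t^2 + ‖x‖^2)}
            = Metric.ball (0:EuclideanSpace ℝ (Fin (m+1))) R
              \ Metric.ball (0:EuclideanSpace ℝ (Fin (m+1))) ρ := by
          ext x
          simp only [mem_setOf_eq, mem_diff, hball x, hcond x, mem_ball_zero_iff, not_lt]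
        rw [hset, measure_diff (ball_subset_ball hρR) measurableSet_ball.nullMeasurableSet
          measure_ball_lt_top.ne, volball R hR0, volball ρ hρ0,
          ← ENNReal.sub_mul (fun _ _ => measure_ball_lt_top.ne),
          ← ENNReal.ofReal_sub _ (by positivity)]
        congr 2
        simp only [sliceLen, if_neg (not_lt.mpr hy0), if_neg (not_le.mpr hts), if_pos hty,
          hR, hρ]
      · -- B3 : y < t, empty
        have hset : {x : EuclideanSpace ℝ (Fin (m+1)) |
            ‖x‖^2 < 1 - t^2 ∧ t ≤ y * Real.sqrt (t^2 + ‖x‖^2)} = ∅ := by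
          ext x
          simp only [mem_setOf_eq, mem_empty_iff_false, iff_false, not_and]
          intro h1 h2
          set S := Real.sqrt (t^2 + ‖x‖^2)
          have hS0 := hSnn x
          have hSsq' := hSsq x
          have hS1 : S < 1 := by nlinarith
          rcases eq_or_lt_of_le hy0 with h | h
          · rw [← h] at h2; simp at h2; linarith
          · nlinarith
        rw [hset]
        simp only [sliceLen, if_neg (not_lt.mpr hy0), if_neg (not_le.mpr hts),
          if_neg (not_le.mpr hty), measure_empty, ENNReal.ofReal_zero, zero_mul]


lemma sliceLen_nonneg (m : ℕ) {y : ℝ} (hy : y ∈ Icc (-1:ℝ) 1) (t : ℝ) :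
    0 ≤ sliceLen (m+1) y t := by
  unfold sliceLen
  split_ifs with h1 h2 h3 h4 h5
  · positivity
  · apply pow_nonneg
    apply mul_nonneg (by linarith [not_le.mp h2])
    apply div_nonneg (Real.sqrt_nonneg _)
    linarith
  · exact le_rfl
  · positivity
  · -- 0 < t ≤ y : difference
    push_neg at h4
    have hy0 : 0 < y := lt_of_lt_of_le h4 h5
    have h1y : (0:ℝ) ≤ 1 - y^2 := by nlinarith [hy.1, hy.2]
    have ht1 : (0:ℝ) ≤ 1 - t^2 := by nlinarith [hy.2]
    have hbase : t * (Real.sqrt (1 - y^2) / y) ≤ Real.sqrt (1 - t^2) := by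
      have h0 : 0 ≤ t * (Real.sqrt (1 - y^2) / y) :=
        mul_nonneg h4.le (div_nonneg (Real.sqrt_nonneg _) hy0.le)
      rw [sq_le_iff' h0 (Real.sqrt_nonneg _), Real.sq_sqrt ht1, mul_pow, div_pow,
        Real.sq_sqrt h1y]
      rw [show t^2*((1-y^2)/y^2) = t^2*(1-y^2)/y^2 by ring,
        div_le_iff₀ (by positivity : (0:ℝ) < y^2)]
      nlinarith
    have h0 : 0 ≤ t * (Real.sqrt (1 - y^2) / y) :=
      mul_nonneg h4.le (div_nonneg (Real.sqrt_nonneg _) hy0.le)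
    have := pow_le_pow_left₀ h0 hbase (m+1)
    linarith
  · exact le_rfl

lemma sliceLen_measurable (M : ℕ) (y : ℝ) : Measurable (sliceLen M y) := by
  have h1 : Measurable fun t : ℝ => Real.sqrt (1 - t^2) ^ M :=
    ((Real.continuous_sqrt.comp (continuous_const.sub (continuous_pow 2))).pow M).measurable
  have hIic : ∀ z : ℝ, MeasurableSet {t : ℝ | t ≤ z} := fun z => measurableSet_Iic
  unfold sliceLen
  rcases lt_or_ge y 0 with hy | hy
  · simp only [if_pos hy]
    exact Measurable.ite (hIic y) h1 <| Measurable.ite (hIic 0)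
      (((measurable_id.neg.mul measurable_const)).pow_const (M)) measurable_const
  · simp only [if_neg (not_lt.mpr hy)]
    exact Measurable.ite (hIic 0) h1 <| Measurable.ite (hIic y)
      (h1.sub ((measurable_id.mul measurable_const).pow_const M)) measurable_const

lemma cap_vol (m : ℕ) {y : ℝ} (hy : y ∈ Icc (-1:ℝ) 1) (w : EuclideanSpace ℝ (Fin (m+2)))
    (hw : ‖w‖ = 1) :
    volume {x : EuclideanSpace ℝ (Fin (m+2)) | ‖x‖ < 1 ∧ ⟪w, x⟫ ≤ y * ‖x‖}
      = ENNReal.ofReal ((volume (Metric.ball (0:EuclideanSpace ℝ (Fin (m+1))) 1)).toReal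
          * ((((m:ℝ)+1)/((m:ℝ)+2)) * ∫ u in (-1:ℝ)..y, (1 - u^2) ^ (((m:ℝ)-1)/2))) := by
  -- orthonormal basis with b 0 = w
  have horth : Orthonormal ℝ (({0} : Set (Fin (m+2))).restrict (fun _ => w)) := by
    constructor
    · intro i
      exact hw
    · intro i j hij
      exact absurd (Subtype.ext (i.2.trans j.2.symm)) hij
  obtain ⟨b, hb⟩ := horth.exists_orthonormalBasis_extension_of_card_eq
    (by simp [finrank_euclideanSpace]) 
  have hb0 : b 0 = w := hb 0 rfl
  have hinner : ∀ x : EuclideanSpace ℝ (Fin (m+2)), ⟪w, x⟫ = b.repr x 0 := by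
    intro x
    rw [← hb0, ← LinearIsometryEquiv.inner_map_map b.repr, OrthonormalBasis.repr_self,
      EuclideanSpace.inner_single_left]
    simp
  -- the coordinate set
  set B : Set (EuclideanSpace ℝ (Fin (m+2))) :=
    {z : EuclideanSpace ℝ (Fin (m+2)) | ‖z‖ < 1 ∧ z 0 ≤ y * ‖z‖} with hB
  have hcont0 : Continuous (fun z : EuclideanSpace ℝ (Fin (m+2)) => z 0) := by
    have : (fun z : EuclideanSpace ℝ (Fin (m+2)) => z 0)
        = (fun g : Fin (m+2) → ℝ => g 0) ∘ (MeasurableEquiv.toLp 2 (Fin (m+2) → ℝ)).symm := rfl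
    rw [this]
    exact (continuous_apply 0).comp (PiLp.continuous_ofLp 2 _)
  have hBmeas : MeasurableSet B := by
    refine MeasurableSet.inter ?_ ?_
    · exact measurableSet_lt measurable_norm measurable_const
    · exact measurableSet_le hcont0.measurable (measurable_const.mul measurable_norm)
  have hpre : {x : EuclideanSpace ℝ (Fin (m+2)) | ‖x‖ < 1 ∧ ⟪w, x⟫ ≤ y * ‖x‖}
      = ⇑b.repr ⁻¹' B := by
    ext x
    simp only [hB, mem_setOf_eq, mem_preimage, LinearIsometryEquiv.norm_map]
    rw [hinner x]
  rw [hpre, b.measurePreserving_repr.measure_preimage hBmeas.nullMeasurableSet]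
  -- product decomposition
  set ι : (ℝ × EuclideanSpace ℝ (Fin (m+1))) → EuclideanSpace ℝ (Fin (m+2)) :=
    fun p => (MeasurableEquiv.toLp 2 (Fin (m+2) → ℝ)).symm.symm
      ((MeasurableEquiv.piFinSuccAbove (fun _ : Fin (m+2) => ℝ) 0).symm
        (p.1, (MeasurableEquiv.toLp 2 (Fin (m+1) → ℝ)).symm p.2)) with hι
  have mp : MeasurePreserving ι volume volume := by
    have mp1 : MeasurePreserving
        (Prod.map (id : ℝ → ℝ) (MeasurableEquiv.toLp 2 (Fin (m+1) → ℝ)).symm)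
        volume volume := by
      rw [Measure.volume_eq_prod, Measure.volume_eq_prod]
      exact (MeasurePreserving.id _).prod
        (PiLp.volume_preserving_ofLp (Fin (m+1)))
    have mp2 : MeasurePreserving
        ((MeasurableEquiv.piFinSuccAbove (fun _ : Fin (m+2) => ℝ) 0).symm)
        volume volume := by
      rw [Measure.volume_eq_prod]
      have := (measurePreserving_piFinSuccAbove (fun _ : Fin (m+2) => (volume : Measure ℝ)) 0).symm
      rw [MeasureTheory.volume_pi]
      convert this using 2 <;> rfl
    have mp3 : MeasurePreserving
        ((MeasurableEquiv.toLp 2 (Fin (m+2) → ℝ)).symm.symm) volume volume :=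
      (PiLp.volume_preserving_toLp (Fin (m+2)))
    exact (mp3.comp mp2).comp mp1
  have hnorm : ∀ p : ℝ × EuclideanSpace ℝ (Fin (m+1)),
      ‖ι p‖ = Real.sqrt (p.1^2 + ‖p.2‖^2) := by
    intro ⟨t, x⟩
    rw [EuclideanSpace.norm_eq]
    congr 1
    have happ : ∀ i : Fin (m+2), (ι (t, x)) i
        = Fin.insertNth (α := fun _ : Fin (m+2) => ℝ) 0 t (fun j => x j) i := fun i => rfl
    rw [Fin.sum_univ_succAbove (fun i => ‖(ι (t,x)) i‖^2) 0]
    simp only [happ, Fin.insertNth_apply_same, Fin.insertNth_apply_succAbove]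
    rw [EuclideanSpace.norm_eq x, Real.sq_sqrt (by positivity)]
    simp [Real.norm_eq_abs, sq_abs]
  have happ0 : ∀ p : ℝ × EuclideanSpace ℝ (Fin (m+1)), (ι p) 0 = p.1 := by
    intro ⟨t, x⟩
    show (Fin.insertNth (α := fun _ : Fin (m+2) => ℝ) 0 t (fun j => x j)) 0 = t
    simp
  have hpre2 : ι ⁻¹' B = {p : ℝ × EuclideanSpace ℝ (Fin (m+1)) |
      ‖p.2‖^2 < 1 - p.1^2 ∧ p.1 ≤ y * Real.sqrt (p.1^2 + ‖p.2‖^2)} := by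
    ext ⟨t, x⟩
    simp only [hB, mem_preimage, mem_setOf_eq, hnorm (t,x), happ0 (t,x)]
    constructor
    · rintro ⟨h1, h2⟩
      refine ⟨?_, h2⟩
      have := (Real.sqrt_lt' one_pos).mp h1
      nlinarith
    · rintro ⟨h1, h2⟩
      refine ⟨?_, h2⟩
      rw [Real.sqrt_lt' one_pos]
      nlinarith
  rw [← mp.measure_preimage hBmeas.nullMeasurableSet, hpre2]
  have hmeas' : MeasurableSet {p : ℝ × EuclideanSpace ℝ (Fin (m+1)) |
      ‖p.2‖^2 < 1 - p.1^2 ∧ p.1 ≤ y * Real.sqrt (p.1^2 + ‖p.2‖^2)} := by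
    refine MeasurableSet.inter ?_ ?_
    · exact measurableSet_lt ((continuous_norm.comp continuous_snd).pow 2).measurable
        ((continuous_const.sub ((continuous_fst.pow 2))).measurable)
    · refine measurableSet_le continuous_fst.measurable ?_
      exact (continuous_const.mul (Real.continuous_sqrt.comp
        ((continuous_fst.pow 2).add ((continuous_norm.comp continuous_snd).pow 2)))).measurable
  rw [Measure.volume_eq_prod, Measure.prod_apply hmeas']
  have hslice : ∀ t : ℝ, volume (Prod.mk t ⁻¹' {p : ℝ × EuclideanSpace ℝ (Fin (m+1)) |
      ‖p.2‖^2 < 1 - p.1^2 ∧ p.1 ≤ y * Real.sqrt (p.1^2 + ‖p.2‖^2)})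
      = ENNReal.ofReal (sliceLen (m+1) y t)
        * volume (Metric.ball (0:EuclideanSpace ℝ (Fin (m+1))) 1) := by
    intro t
    have : Prod.mk t ⁻¹' {p : ℝ × EuclideanSpace ℝ (Fin (m+1)) |
        ‖p.2‖^2 < 1 - p.1^2 ∧ p.1 ≤ y * Real.sqrt (p.1^2 + ‖p.2‖^2)}
        = {x : EuclideanSpace ℝ (Fin (m+1)) |
            ‖x‖^2 < 1 - t^2 ∧ t ≤ y * Real.sqrt (t^2 + ‖x‖^2)} := rfl
    rw [this, slice_vol m hy t]
  rw [lintegral_congr hslice]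
  have hmble : Measurable fun t : ℝ => ENNReal.ofReal (sliceLen (m+1) y t) :=
    ENNReal.measurable_ofReal.comp (sliceLen_measurable (m+1) y)
  rw [lintegral_mul_const _ hmble]
  have hlint : ∫⁻ t, ENNReal.ofReal (sliceLen (m+1) y t)
      = ENNReal.ofReal (∫ t, sliceLen (m+1) y t) :=
    (ofReal_integral_eq_lintegral_ofReal (sliceLen_intg hy).1
      (Filter.Eventually.of_forall (sliceLen_nonneg m hy))).symm
  have hΦ0 : 0 ≤ ∫ u in (-1:ℝ)..y, (1 - u^2) ^ (((m:ℝ)-1)/2) := by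
    apply intervalIntegral.integral_nonneg hy.1
    intro u hu
    apply Real.rpow_nonneg
    nlinarith [hu.1, hu.2, hy.2]
  rw [hlint, (sliceLen_intg hy).2,
    ← ENNReal.ofReal_toReal (measure_ball_lt_top.ne :
      volume (Metric.ball (0:EuclideanSpace ℝ (Fin (m+1))) 1) ≠ ⊤),
    ← ENNReal.ofReal_mul (mul_nonneg (by positivity) hΦ0)]
  rw [ENNReal.ofReal_toReal measure_ball_lt_top.ne]
  congr 1
  ring


-- W in terms of Φ
lemma W_eq (m : ℕ) {y : ℝ} (hy : y ∈ Icc (-1:ℝ) 1) :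
    (∫ s in Set.Ioc (0:ℝ) ((1+y)/2),
        s ^ ((((m:ℝ)+1)/2) - 1) * (1 - s) ^ ((((m:ℝ)+1)/2) - 1))
      = ((2:ℝ) ^ (1 - ((m:ℝ)+1))) * ∫ u in (-1:ℝ)..y, (1 - u^2) ^ (((m:ℝ)-1)/2) := by
  set a : ℝ := ((m:ℝ)+1)/2 with ha
  set f : ℝ → ℝ := fun s => s ^ (a - 1) * (1 - s) ^ (a - 1) with hf
  have ht0 : (0:ℝ) ≤ (1+y)/2 := by linarith [hy.1]
  rw [← intervalIntegral.integral_of_le ht0]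
  have hsub := intervalIntegral.integral_comp_mul_add f
    (by norm_num : (1:ℝ)/2 ≠ 0) ((1:ℝ)/2) (a := -1) (b := y)
  have h1 : (1:ℝ)/2 * (-1) + 1/2 = 0 := by norm_num
  have h2 : (1:ℝ)/2 * y + 1/2 = (1+y)/2 := by ring
  rw [h1, h2] at hsub
  have h3 : ∫ x in (0:ℝ)..((1+y)/2), f x
      = (1/2) * ∫ x in (-1:ℝ)..y, f (1/2 * x + 1/2) := by
    rw [hsub, smul_eq_mul]
    ring
  rw [h3]
  have h4 : ∫ x in (-1:ℝ)..y, f (1/2 * x + 1/2)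
      = ∫ x in (-1:ℝ)..y, (2 * (2:ℝ) ^ (1 - ((m:ℝ)+1))) * (1 - x^2) ^ (((m:ℝ)-1)/2) := by
    refine intervalIntegral.integral_congr fun u hu => ?_
    have hu' : u ∈ Icc (-1:ℝ) 1 := by
      rcases hu with ⟨h5, h6⟩
      rw [inf_le_iff, le_sup_iff] at *
      constructor
      · rcases h5 with h | h
        · linarith
        · linarith [hy.1]
      · rcases h6 with h | h
        · linarith
        · linarith [hy.2]
    have hp : (0:ℝ) ≤ 1/2 * u + 1/2 := by linarith [hu'.1]
    have hq : (0:ℝ) ≤ 1 - (1/2 * u + 1/2) := by linarith [hu'.2]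
    have e1 : (1:ℝ) - (1/2 * u + 1/2) = (1 - u)/2 := by ring
    show (1/2 * u + 1/2) ^ (a - 1) * (1 - (1/2 * u + 1/2)) ^ (a - 1) = _
    rw [e1, ← Real.mul_rpow (by linarith [hu'.1]) (by linarith [hu'.2] : (0:ℝ) ≤ (1-u)/2)]
    have e2 : (1/2 * u + 1/2) * ((1 - u)/2) = (1 - u^2)/4 := by ring
    rw [e2, Real.div_rpow (by nlinarith [hu'.1, hu'.2]) (by norm_num : (0:ℝ) ≤ 4)]
    have e4 : a - 1 = ((m:ℝ)-1)/2 := by rw [ha]; ring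
    have e5 : (4:ℝ)^(((m:ℝ)-1)/2) * (2 * (2:ℝ) ^ (1 - ((m:ℝ)+1))) = 1 := by
      have h44 : (4:ℝ) = 2 ^ (2:ℝ) := by
        rw [show (2:ℝ)^(2:ℝ) = 2^(2:ℕ) by rw [← Real.rpow_natCast]; norm_num]
        norm_num
      rw [h44, ← Real.rpow_mul (by norm_num : (0:ℝ) ≤ 2),
        show (2:ℝ) * (2 ^ (1 - ((m:ℝ)+1))) = 2 ^ (1:ℝ) * 2 ^ (1 - ((m:ℝ)+1)) by rw [Real.rpow_one],
        ← Real.rpow_add (by norm_num : (0:ℝ) < 2), ← Real.rpow_add (by norm_num : (0:ℝ) < 2)]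
      rw [show (2:ℝ) * (((m:ℝ)-1)/2) + (1 + (1 - ((m:ℝ)+1))) = 0 by ring, Real.rpow_zero]
    have e6 : ((4:ℝ)^(((m:ℝ)-1)/2))⁻¹ = 2 * (2:ℝ) ^ (1 - ((m:ℝ)+1)) :=
      inv_eq_of_mul_eq_one_right e5
    rw [e4, div_eq_mul_inv, e6]
    ring
  rw [h4, intervalIntegral.integral_const_mul]
  ring

-- the constants identity
lemma const_eq (m : ℕ) :
    (volume (Metric.ball (0:EuclideanSpace ℝ (Fin (m+1))) 1)).toReal
        * (((m:ℝ)+1)/((m:ℝ)+2))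
        / (volume (Metric.ball (0:EuclideanSpace ℝ (Fin (m+2))) 1)).toReal
      = (2:ℝ) ^ (1 - ((m:ℝ)+1))
        / (Real.Gamma (((m:ℝ)+1)/2) * Real.Gamma (((m:ℝ)+1)/2)
            / Real.Gamma ((((m:ℝ)+1)/2) + (((m:ℝ)+1)/2))) := by
  set a : ℝ := ((m:ℝ)+1)/2 with ha
  have ha0 : 0 < a := by rw [ha]; positivity
  have hS : (0:ℝ) < Real.sqrt π := Real.sqrt_pos.mpr Real.pi_pos
  have hA : 0 < Real.Gamma a := Real.Gamma_pos_of_pos ha0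
  have hB : 0 < Real.Gamma (a + 1/2) := Real.Gamma_pos_of_pos (by linarith)
  have hC : 0 < Real.Gamma (2*a) := Real.Gamma_pos_of_pos (by linarith)
  have hP : (0:ℝ) < 2 ^ (1 - 2*a) := Real.rpow_pos_of_pos (by norm_num) _
  have hdup := Real.Gamma_mul_Gamma_add_half a
  -- ball volumes
  have hvol : ∀ k : ℕ, (volume (Metric.ball (0:EuclideanSpace ℝ (Fin (k+1))) 1)).toReal
      = Real.sqrt π ^ (k+1) / Real.Gamma ((k+1)/2 + 1) := by
    intro k
    rw [EuclideanSpace.volume_ball]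
    simp only [Fintype.card_fin]
    rw [ENNReal.toReal_mul]
    rw [ENNReal.ofReal_one, one_pow, ENNReal.toReal_one, one_mul, ENNReal.toReal_ofReal]
    · push_cast; ring_nf
    · have : 0 < Real.Gamma (((k:ℝ)+1)/2 + 1) := Real.Gamma_pos_of_pos (by positivity)
      positivity
  have hv1 := hvol m
  have hv2 := hvol (m+1)
  have hG1 : Real.Gamma (((m:ℝ)+1)/2 + 1) = a * Real.Gamma a := by
    rw [ha, Real.Gamma_add_one (by positivity)]
  have hG2 : Real.Gamma (((m:ℝ)+1+1)/2 + 1) = (a + 1/2) * Real.Gamma (a + 1/2) := by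
    rw [show ((m:ℝ)+1+1)/2 + 1 = (a + 1/2) + 1 by rw [ha]; ring]
    rw [Real.Gamma_add_one (by positivity)]
  rw [hv1, hv2]
  push_cast
  rw [hG1, hG2]
  have hsp : Real.sqrt π ^ (m+1+1) = Real.sqrt π ^ (m+1) * Real.sqrt π := pow_succ _ _
  rw [hsp]
  have h2a : a + a = 2*a := by ring
  rw [h2a]
  have hpow : (2:ℝ) ^ (1 - ((m:ℝ)+1)) = 2 ^ (1 - 2*a) := by
    rw [show (1:ℝ) - 2*a = 1 - ((m:ℝ)+1) by rw [ha]; ring]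
  rw [hpow]
  have hm1 : ((m:ℝ)+1) = 2*a := by rw [ha]; ring
  have hm2 : ((m:ℝ)+2) = 2*a+1 := by rw [ha]; ring
  rw [hm1, hm2]
  have hne : Real.sqrt π ^ (m+1) ≠ 0 := by positivity
  have e1 : Real.sqrt π ^ (m+1) / (a * Real.Gamma a) * (2*a / (2*a+1))
      / (Real.sqrt π ^ (m+1) * Real.sqrt π / ((a + 1/2) * Real.Gamma (a+1/2)))
      = Real.Gamma (a+1/2) / (Real.Gamma a * Real.sqrt π) := by
    field_simp
  have e2 : (2:ℝ) ^ (1 - 2*a) / (Real.Gamma a * Real.Gamma a / Real.Gamma (2*a))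
      = (Real.Gamma (2*a) * 2 ^ (1 - 2*a)) / (Real.Gamma a * Real.Gamma a) := by
    field_simp
  rw [e1, e2, div_eq_div_iff (by positivity) (by positivity)]
  linear_combination Real.Gamma a * hdup


lemma cap_measure (m : ℕ) {y : ℝ} (hy : y ∈ Icc (-1:ℝ) 1)
    (w : EuclideanSpace ℝ (Fin (m+2))) (hw : ‖w‖ = 1) :
    uniformSphere (m+2) {ω : Metric.sphere (0 : EuclideanSpace ℝ (Fin (m+2))) 1 |
        ⟪w, (ω : EuclideanSpace ℝ (Fin (m+2)))⟫ ≤ y}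
      = ENNReal.ofReal (regIncBeta (((m:ℝ)+1)/2) (((m:ℝ)+1)/2) ((1+y)/2)) := by
  have hScont : Continuous fun ω : Metric.sphere (0 : EuclideanSpace ℝ (Fin (m+2))) 1 =>
      (⟪w, (ω : EuclideanSpace ℝ (Fin (m+2)))⟫ : ℝ) :=
    Continuous.inner continuous_const continuous_subtype_val
  have hSmeas : MeasurableSet {ω : Metric.sphere (0 : EuclideanSpace ℝ (Fin (m+2))) 1 |
      ⟪w, (ω : EuclideanSpace ℝ (Fin (m+2)))⟫ ≤ y} :=
    measurableSet_le hScont.measurable measurable_const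
  have hdim : Module.finrank ℝ (EuclideanSpace ℝ (Fin (m+2))) = m + 2 := by
    simp [finrank_euclideanSpace]
  rw [uniformSphere, Measure.smul_apply, smul_eq_mul,
    Measure.toSphere_apply' _ hSmeas, Measure.toSphere_apply_univ, hdim]
  have hsmul : (Ioo (0:ℝ) 1) • (Subtype.val ''
      {ω : Metric.sphere (0 : EuclideanSpace ℝ (Fin (m+2))) 1 |
        ⟪w, (ω : EuclideanSpace ℝ (Fin (m+2)))⟫ ≤ y})
      = {x : EuclideanSpace ℝ (Fin (m+2)) | ‖x‖ < 1 ∧ ⟪w, x⟫ ≤ y * ‖x‖} \ {0} := by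
    ext x
    constructor
    · intro hx
      rw [Set.mem_smul] at hx
      obtain ⟨r, hr, u, hu, rfl⟩ := hx
      obtain ⟨ω, hω, rfl⟩ := hu
      have hωn : ‖(ω : EuclideanSpace ℝ (Fin (m+2)))‖ = 1 :=
        mem_sphere_zero_iff_norm.mp ω.2
      have hrn : ‖r • (ω : EuclideanSpace ℝ (Fin (m+2)))‖ = r := by
        rw [norm_smul, hωn, mul_one, Real.norm_eq_abs, abs_of_pos hr.1]
      refine ⟨⟨by rw [hrn]; exact hr.2, ?_⟩, ?_⟩
      · rw [real_inner_smul_right, hrn]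
        rw [mul_comm y r]
        exact mul_le_mul_of_nonneg_left hω hr.1.le
      · intro h0
        rw [Set.mem_singleton_iff] at h0
        have := hrn
        rw [h0] at this
        simp only [norm_zero] at this
        exact hr.1.ne this
    · rintro ⟨⟨h1, h2⟩, h0⟩
      rw [Set.mem_singleton_iff] at h0
      have hnx : 0 < ‖x‖ := norm_pos_iff.mpr h0
      rw [Set.mem_smul]
      refine ⟨‖x‖, ⟨hnx, h1⟩, ‖x‖⁻¹ • x, ?_, smul_inv_smul₀ hnx.ne' x⟩
      refine ⟨⟨‖x‖⁻¹ • x, ?_⟩, ?_, rfl⟩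
      · rw [mem_sphere_zero_iff_norm, norm_smul, Real.norm_eq_abs, abs_of_pos (by positivity),
          inv_mul_cancel₀ hnx.ne']
      · show ⟪w, ‖x‖⁻¹ • x⟫ ≤ y
        rw [real_inner_smul_right]
        rw [show y = ‖x‖⁻¹ * (y * ‖x‖) by field_simp]
        exact mul_le_mul_of_nonneg_left h2 (by positivity)
  rw [hsmul, measure_diff_null (measure_singleton _), cap_vol m hy w hw]
  -- now the scalar computation
  set Vn := volume (Metric.ball (0:EuclideanSpace ℝ (Fin (m+2))) 1) with hVn
  set X : ℝ := (volume (Metric.ball (0:EuclideanSpace ℝ (Fin (m+1))) 1)).toReal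
    * ((((m:ℝ)+1)/((m:ℝ)+2)) * ∫ u in (-1:ℝ)..y, (1 - u^2) ^ (((m:ℝ)-1)/2)) with hX
  have hVn0 : Vn ≠ 0 := (measure_ball_pos _ _ one_pos).ne'
  have hVntop : Vn ≠ ⊤ := measure_ball_lt_top.ne
  have hd0 : ((m+2 : ℕ) : ℝ≥0∞) ≠ 0 := by simp
  have hdtop : ((m+2 : ℕ) : ℝ≥0∞) ≠ ⊤ := ENNReal.natCast_ne_top _
  have hcalc : (((m+2 : ℕ) : ℝ≥0∞) * Vn)⁻¹ * (((m+2 : ℕ) : ℝ≥0∞) * ENNReal.ofReal X)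
      = ENNReal.ofReal X / Vn := by
    rw [ENNReal.mul_inv (Or.inl hd0) (Or.inl hdtop)]
    rw [mul_comm (((m+2 : ℕ) : ℝ≥0∞))⁻¹ Vn⁻¹, mul_assoc, ← mul_assoc (((m+2 : ℕ) : ℝ≥0∞))⁻¹,
      ENNReal.inv_mul_cancel hd0 hdtop, one_mul, div_eq_mul_inv, mul_comm]
  rw [hcalc]
  have hVnr : 0 < Vn.toReal := ENNReal.toReal_pos hVn0 hVntop
  rw [← ENNReal.ofReal_toReal hVntop, ← ENNReal.ofReal_div_of_pos hVnr]
  congr 1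
  rw [regIncBeta, W_eq m hy]
  have := const_eq m
  set Φ : ℝ := ∫ u in (-1:ℝ)..y, (1 - u^2) ^ (((m:ℝ)-1)/2)
  set D : ℝ := Real.Gamma (((m:ℝ)+1)/2) * Real.Gamma (((m:ℝ)+1)/2)
      / Real.Gamma ((((m:ℝ)+1)/2) + (((m:ℝ)+1)/2))
  set Vr : ℝ := (volume (Metric.ball (0:EuclideanSpace ℝ (Fin (m+1))) 1)).toReal
  have hre : X / Vn.toReal = (Vr * (((m:ℝ)+1)/((m:ℝ)+2)) / Vn.toReal) * Φ := by
    rw [hX]; ring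
  rw [hre, this]
  ring


/-- CDF of `X = ⟪v, u⟫` for `u` uniform on the cross-section
`{u ∈ S^{d-1} : ⟪u, q⟫ = cos ψ}`, which is parametrized as
`u = cos ψ • q + sin ψ • f ω` where `f` is a linear isometry of `ℝ^(d-1)` onto the
orthogonal complement of `q` and `ω` is uniform on the unit sphere of `ℝ^(d-1)`. -/
theorem stmt2 (d : ℕ) (hd : 3 ≤ d) (q v : EuclideanSpace ℝ (Fin d))
    (hq : ‖q‖ = 1) (hv : ‖v‖ = 1)
    (φ ψ : ℝ) (hφ : φ ∈ Set.Ioo 0 π) (hψ : ψ ∈ Set.Ioo 0 π)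
    (hqv : ⟪q, v⟫ = Real.cos φ)
    (f : EuclideanSpace ℝ (Fin (d - 1)) →ₗᵢ[ℝ] EuclideanSpace ℝ (Fin d))
    (hf : ∀ x, ⟪f x, q⟫ = 0)
    (x : ℝ) (hx : x ∈ Set.Icc (Real.cos (φ + ψ)) (Real.cos (φ - ψ))) :
    Measure.map
      (fun ω : Metric.sphere (0 : EuclideanSpace ℝ (Fin (d - 1))) 1 =>
        ⟪v, Real.cos ψ • q + Real.sin ψ • f (ω : EuclideanSpace ℝ (Fin (d - 1)))⟫)
      (uniformSphere (d - 1)) (Set.Iic x)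
      = ENNReal.ofReal (regIncBeta (((d : ℝ) - 2) / 2) (((d : ℝ) - 2) / 2)
          (1 / 2 + (x - Real.cos φ * Real.cos ψ) / (2 * Real.sin φ * Real.sin ψ))) := by
  obtain ⟨m, rfl⟩ : ∃ m, d = m + 3 := ⟨d - 3, by omega⟩
  have hsφ : 0 < Real.sin φ := Real.sin_pos_of_pos_of_lt_pi hφ.1 hφ.2
  have hsψ : 0 < Real.sin ψ := Real.sin_pos_of_pos_of_lt_pi hψ.1 hψ.2
  have hqv' : ⟪v, q⟫ = Real.cos φ := by rw [real_inner_comm]; exact hqv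
  -- construct w
  have hq0 : q ≠ 0 := fun h => by simp [h] at hq
  set v' : EuclideanSpace ℝ (Fin (m+3)) := v - Real.cos φ • q with hv'
  have hqq : ⟪q, q⟫ = 1 := by
    rw [real_inner_self_eq_norm_sq, hq]; norm_num
  have hv'perp : ⟪q, v'⟫ = 0 := by
    rw [hv', inner_sub_right, real_inner_smul_right, hqq, hqv]
    ring
  -- range f = (ℝ ∙ q)ᗮ
  have hle : LinearMap.range f.toLinearMap ≤ (Submodule.span ℝ {q})ᗮ := by
    rintro _ ⟨z, rfl⟩
    rw [Submodule.mem_orthogonal_singleton_iff_inner_right]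
    rw [real_inner_comm]
    exact hf z
  have hrange : LinearMap.range f.toLinearMap = (Submodule.span ℝ {q})ᗮ := by
    apply Submodule.eq_of_le_of_finrank_eq hle
    rw [LinearMap.finrank_range_of_inj f.injective]
    have h1 : Module.finrank ℝ (Submodule.span ℝ ({q} : Set (EuclideanSpace ℝ (Fin (m+3)))))
        = 1 := finrank_span_singleton hq0
    have h2 := Submodule.finrank_add_finrank_orthogonal
      (K := Submodule.span ℝ ({q} : Set (EuclideanSpace ℝ (Fin (m+3)))))
    rw [h1] at h2
    have h3 : Module.finrank ℝ (EuclideanSpace ℝ (Fin (m+3))) = m + 3 := by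
      simp [finrank_euclideanSpace]
    have h4 : Module.finrank ℝ (EuclideanSpace ℝ (Fin (m+3-1))) = m + 2 := by
      simp [finrank_euclideanSpace]
    omega
  have hv'mem : v' ∈ LinearMap.range f.toLinearMap := by
    rw [hrange, Submodule.mem_orthogonal_singleton_iff_inner_right]
    exact hv'perp
  obtain ⟨w₀, hw₀⟩ := hv'mem
  have hw₀ : f w₀ = v' := hw₀
  have hnv' : ‖v'‖ = Real.sin φ := by
    have hsq : ‖v'‖^2 = Real.sin φ ^ 2 := by
      rw [← real_inner_self_eq_norm_sq, hv', inner_sub_sub_self]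
      rw [real_inner_smul_right, real_inner_smul_left, real_inner_smul_left,
        real_inner_smul_right, hqq, hqv, hqv', real_inner_self_eq_norm_sq, hv]
      have := Real.sin_sq_add_cos_sq φ
      nlinarith
    have h1 : ‖v'‖ = |Real.sin φ| := by
      have := abs_eq_abs.mpr (Or.inl hsq)
      nlinarith [norm_nonneg v', abs_nonneg (Real.sin φ), sq_abs (Real.sin φ)]
    rw [h1, abs_of_pos hsφ]
  have hnw₀ : ‖w₀‖ = Real.sin φ := by
    rw [← f.norm_map w₀, hw₀, hnv']
  set w : EuclideanSpace ℝ (Fin (m+3-1)) := (Real.sin φ)⁻¹ • w₀ with hwdef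
  have hw : ‖w‖ = 1 := by
    rw [hwdef, norm_smul, Real.norm_eq_abs, abs_of_pos (by positivity), hnw₀]
    field_simp
  have hw₀w : w₀ = Real.sin φ • w := by
    rw [hwdef, smul_smul, mul_inv_cancel₀ hsφ.ne', one_smul]
  -- the map rewrites
  have hg : ∀ ω : Metric.sphere (0 : EuclideanSpace ℝ (Fin (m+3-1))) 1,
      ⟪v, Real.cos ψ • q + Real.sin ψ • f (ω : EuclideanSpace ℝ (Fin (m+3-1)))⟫
        = Real.cos φ * Real.cos ψ
          + Real.sin φ * Real.sin ψ * ⟪w, (ω : EuclideanSpace ℝ (Fin (m+3-1)))⟫ := by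
    intro ω
    rw [inner_add_right, real_inner_smul_right, real_inner_smul_right, hqv']
    have hvfo : ⟪v, f (ω : EuclideanSpace ℝ (Fin (m+3-1)))⟫
        = Real.sin φ * ⟪w, (ω : EuclideanSpace ℝ (Fin (m+3-1)))⟫ := by
      have hvsplit : v = v' + Real.cos φ • q := by rw [hv']; abel
      rw [hvsplit, inner_add_left, real_inner_smul_left]
      have h5 : ⟪q, f (ω : EuclideanSpace ℝ (Fin (m+3-1)))⟫ = 0 := by
        rw [real_inner_comm]; exact hf _
      rw [h5, ← hw₀, f.inner_map_map, hw₀w, real_inner_smul_left]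
      ring
    rw [hvfo]
    ring
  -- measurability of the map
  have hgcont : Continuous (fun ω : Metric.sphere (0 : EuclideanSpace ℝ (Fin (m+3-1))) 1 =>
      ⟪v, Real.cos ψ • q + Real.sin ψ • f (ω : EuclideanSpace ℝ (Fin (m+3-1)))⟫) := by
    apply Continuous.inner continuous_const
    exact continuous_const.add ((continuous_const.fun_smul
      (f.continuous.comp continuous_subtype_val)))
  rw [Measure.map_apply hgcont.measurable measurableSet_Iic]
  set y : ℝ := (x - Real.cos φ * Real.cos ψ) / (Real.sin φ * Real.sin ψ) with hydef
  have hsps : 0 < Real.sin φ * Real.sin ψ := mul_pos hsφ hsψ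
  have hy : y ∈ Icc (-1:ℝ) 1 := by
    have h1 := hx.1
    have h2 := hx.2
    rw [Real.cos_add] at h1
    rw [Real.cos_sub] at h2
    constructor
    · rw [hydef, le_div_iff₀ hsps]; nlinarith
    · rw [hydef, div_le_one hsps]; nlinarith
  have hpre : ((fun ω : Metric.sphere (0 : EuclideanSpace ℝ (Fin (m+3-1))) 1 =>
      ⟪v, Real.cos ψ • q + Real.sin ψ • f (ω : EuclideanSpace ℝ (Fin (m+3-1)))⟫) ⁻¹' Iic x)
      = {ω : Metric.sphere (0 : EuclideanSpace ℝ (Fin (m+3-1))) 1 |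
          ⟪w, (ω : EuclideanSpace ℝ (Fin (m+3-1)))⟫ ≤ y} := by
    ext ω
    simp only [Set.mem_preimage, Set.mem_Iic, Set.mem_setOf_eq, hg ω]
    rw [hydef, le_div_iff₀ hsps]
    constructor <;> intro h <;> nlinarith
  rw [hpre]
  have : uniformSphere (m+3-1) {ω : Metric.sphere (0 : EuclideanSpace ℝ (Fin (m+3-1))) 1 |
          ⟪w, (ω : EuclideanSpace ℝ (Fin (m+3-1)))⟫ ≤ y}
      = ENNReal.ofReal (regIncBeta (((m:ℝ)+1)/2) (((m:ℝ)+1)/2) ((1+y)/2)) :=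
    cap_measure m hy w hw
  rw [this]
  congr 1
  have hcast : ((m+3 : ℕ) : ℝ) - 2 = (m:ℝ) + 1 := by push_cast; ring
  rw [hcast]
  congr 1
  rw [hydef]
  field_simp
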